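/- With k ≠ 0 and β = k², define for a partition λ the energy E^{(k)}_λ = ∑_i ( λ_i² k^{-1} − (2i − 1) λ_i k ). Then under the substitution k → −k^{-1} and λ → λᵗ the energy is invariant: E^{(k)}_λ = E^{(-1/k)}_{λᵗ}. -/

import Mathlib

open Finset

lemma sum_odd_real (m : ℕ) : ∑ j ∈ Icc 1 m, (2*(j:ℝ) - 1) = (m:ℝ)^2 := by
  induction m with
  | zero => simp
  | succ n ih =>
    rw [Finset.sum_Icc_succ_top (Nat.one_le_iff_ne_zero.mpr (Nat.succ_ne_zero n)), ih]
    push_cast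
    ring

lemma filter_Icc_le (m n : ℕ) (h : n ≤ m) :
    (Icc 1 m).filter (fun j => j ≤ n) = Icc 1 n := by
  ext j
  simp only [mem_filter, mem_Icc]
  omega

lemma L1 (L : ℕ) (hL : 0 < L) (f : Fin L → ℕ) (hanti : Antitone f) :
    ∑ j ∈ Icc 1 (f ⟨0, hL⟩),
        (2*(j:ℝ) - 1) * (((univ.filter (fun i : Fin L => j ≤ f i)).card : ℝ))
      = ∑ i : Fin L, (f i : ℝ)^2 := by
  have hsub : ∀ i : Fin L, f i ≤ f ⟨0, hL⟩ := fun i =>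
    hanti (by simp [Fin.le_def])
  have step : ∀ j : ℕ, (2*(j:ℝ) - 1) * (((univ.filter (fun i : Fin L => j ≤ f i)).card : ℝ))
      = ∑ i : Fin L, (if j ≤ f i then (2*(j:ℝ) - 1) else 0) := by
    intro j
    rw [← Finset.sum_filter, Finset.sum_const, nsmul_eq_mul, mul_comm]
  simp only [step]
  rw [Finset.sum_comm]
  refine Finset.sum_congr rfl fun i _ => ?_
  rw [← Finset.sum_filter, filter_Icc_le _ _ (hsub i), sum_odd_real]

lemma card_le_fin {L : ℕ} (i : Fin L) :
    (univ.filter (fun i' : Fin L => i' ≤ i)).card = (i : ℕ) + 1 := by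
  have : (univ.filter (fun i' : Fin L => i' ≤ i)) = Iic i := by ext x; simp
  rw [this, Fin.card_Iic]

lemma card_lt_fin {L : ℕ} (i : Fin L) :
    (univ.filter (fun i' : Fin L => ¬ i ≤ i')).card = (i : ℕ) := by
  have : (univ.filter (fun i' : Fin L => ¬ i ≤ i')) = Iio i := by
    ext x; simp [not_le]
  rw [this, Fin.card_Iio]

lemma L2 (L : ℕ) (hL : 0 < L) (f : Fin L → ℕ) (hanti : Antitone f) :
    ∑ j ∈ Icc 1 (f ⟨0, hL⟩),
        (((univ.filter (fun i : Fin L => j ≤ f i)).card : ℝ))^2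
      = ∑ i : Fin L, (2*((i:ℕ):ℝ) + 1) * (f i : ℝ) := by
  have hsub : ∀ i : Fin L, f i ≤ f ⟨0, hL⟩ := fun i =>
    hanti (by simp [Fin.le_def])
  have cardstep : ∀ j : ℕ, (((univ.filter (fun i : Fin L => j ≤ f i)).card : ℝ))
      = ∑ i : Fin L, (if j ≤ f i then (1:ℝ) else 0) := by
    intro j
    rw [← Finset.sum_filter, Finset.sum_const, nsmul_eq_mul, mul_one]
  have sqstep : ∀ j : ℕ, (((univ.filter (fun i : Fin L => j ≤ f i)).card : ℝ))^2
      = ∑ i : Fin L, ∑ i' : Fin L,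
          (if j ≤ min (f i) (f i') then (1:ℝ) else 0) := by
    intro j
    rw [sq, cardstep, Finset.sum_mul_sum]
    refine Finset.sum_congr rfl fun i _ => Finset.sum_congr rfl fun i' _ => ?_
    by_cases h1 : j ≤ f i <;> by_cases h2 : j ≤ f i' <;>
      simp [h1, h2, le_min_iff]
  simp only [sqstep]
  rw [Finset.sum_comm]
  have inner : ∀ i : Fin L,
      (∑ j ∈ Icc 1 (f ⟨0, hL⟩), ∑ i' : Fin L,
          (if j ≤ min (f i) (f i') then (1:ℝ) else 0))
      = ∑ i' : Fin L, (min (f i) (f i') : ℝ) := by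
    intro i
    rw [Finset.sum_comm]
    refine Finset.sum_congr rfl fun i' _ => ?_
    rw [← Finset.sum_filter, filter_Icc_le _ _ ((min_le_left _ _).trans (hsub i)),
      Finset.sum_const, Nat.card_Icc, nsmul_eq_mul, mul_one]
    push_cast
    ring
  simp only [inner]
  have minstep : ∀ i i' : Fin L, min ((f i : ℝ)) ((f i' : ℝ))
      = (if i' ≤ i then (f i : ℝ) else 0) + (if i' ≤ i then 0 else (f i' : ℝ)) := by
    intro i i'
    by_cases h : i' ≤ i
    · simp [h, min_eq_left (Nat.cast_le.mpr (hanti h))]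
    · have h' : i ≤ i' := le_of_not_ge h
      simp [h, min_eq_right (Nat.cast_le.mpr (hanti h'))]
  simp only [minstep]
  rw [Finset.sum_congr rfl fun i _ => Finset.sum_add_distrib]
  rw [Finset.sum_add_distrib]
  have p1 : ∀ i : Fin L, (∑ i' : Fin L, if i' ≤ i then (f i : ℝ) else 0)
      = ((i:ℕ) + 1 : ℝ) * (f i : ℝ) := by
    intro i
    rw [← Finset.sum_filter, Finset.sum_const, nsmul_eq_mul, card_le_fin]
    push_cast; ring
  have p2 : (∑ i : Fin L, ∑ i' : Fin L, if i' ≤ i then (0:ℝ) else (f i' : ℝ))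
      = ∑ i' : Fin L, ((i':ℕ) : ℝ) * (f i' : ℝ) := by
    rw [Finset.sum_comm]
    refine Finset.sum_congr rfl fun i' _ => ?_
    have : (∑ i : Fin L, if i' ≤ i then (0:ℝ) else (f i' : ℝ))
        = ∑ i : Fin L, if ¬ i' ≤ i then (f i' : ℝ) else 0 := by
      refine Finset.sum_congr rfl fun i _ => ?_
      by_cases h : i' ≤ i <;> simp [h]
    rw [this, ← Finset.sum_filter, Finset.sum_const, nsmul_eq_mul, card_lt_fin]
  simp only [p1]
  rw [p2, ← Finset.sum_add_distrib]
  refine Finset.sum_congr rfl fun i _ => ?_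
  ring

theorem stmt_3 (L : ℕ) (hL : 0 < L) (f : Fin L → ℕ) (hanti : Antitone f)
    (hpos : ∀ i, 0 < f i) (k : ℝ) (hk : k ≠ 0) :
    ∑ i : Fin L, ((f i : ℝ) ^ 2 / k - (2 * ((i : ℕ) : ℝ) + 1) * (f i : ℝ) * k)
      = ∑ j ∈ Finset.Icc 1 (f ⟨0, hL⟩),
          ((((Finset.univ.filter (fun i : Fin L => j ≤ f i)).card : ℝ)) ^ 2 / (-1 / k)
            - (2 * (j : ℝ) - 1) * (((Finset.univ.filter (fun i : Fin L => j ≤ f i)).card : ℝ))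
              * (-1 / k)) := by
  have hL1 := L1 L hL f hanti
  have hL2 := L2 L hL f hanti
  have rhs_eq : ∀ j ∈ Icc 1 (f ⟨0, hL⟩),
      ((((univ.filter (fun i : Fin L => j ≤ f i)).card : ℝ)) ^ 2 / (-1 / k)
        - (2 * (j : ℝ) - 1) * (((univ.filter (fun i : Fin L => j ≤ f i)).card : ℝ)) * (-1 / k))
      = (2 * (j : ℝ) - 1) * (((univ.filter (fun i : Fin L => j ≤ f i)).card : ℝ)) / k
        - (((univ.filter (fun i : Fin L => j ≤ f i)).card : ℝ)) ^ 2 * k := by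
    intro j _
    rw [neg_div, div_neg, one_div, div_inv_eq_mul]
    ring
  have e1 : (∑ i : Fin L, (f i : ℝ)^2) / k
        - (∑ i : Fin L, (2 * ((i:ℕ):ℝ) + 1) * (f i : ℝ)) * k
      = ∑ i : Fin L, ((f i : ℝ) ^ 2 / k - (2 * ((i : ℕ) : ℝ) + 1) * (f i : ℝ) * k) := by
    rw [Finset.sum_div, Finset.sum_mul, ← Finset.sum_sub_distrib]
  have e2 : (∑ j ∈ Icc 1 (f ⟨0, hL⟩),
          (2 * (j : ℝ) - 1) * (((univ.filter (fun i : Fin L => j ≤ f i)).card : ℝ))) / k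
        - (∑ j ∈ Icc 1 (f ⟨0, hL⟩),
            (((univ.filter (fun i : Fin L => j ≤ f i)).card : ℝ))^2) * k
      = ∑ j ∈ Icc 1 (f ⟨0, hL⟩),
          ((2 * (j : ℝ) - 1) * (((univ.filter (fun i : Fin L => j ≤ f i)).card : ℝ)) / k
            - (((univ.filter (fun i : Fin L => j ≤ f i)).card : ℝ)) ^ 2 * k) := by
    rw [Finset.sum_div, Finset.sum_mul, ← Finset.sum_sub_distrib]
  rw [Finset.sum_congr rfl rhs_eq, ← e1, ← e2, hL1, hL2]
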